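/- Let h be holomorphic on a connected open set Ω ⊆ ℂ with h, h' nonvanishing, and suppose h(z)h''(z) = c·h'(z)² on Ω for some real constant c ≠ 1. Then there exist constants a, b ∈ ℂ with h(z)^{1−c} = az + b on Ω (for a suitable branch); if c = 1 then h(z) = A e^{Bz} for some constants A, B ∈ ℂ. -/

import Mathlib

open Complex

lemma const_of_deriv_zero {Ω : Set ℂ} (hΩ : IsOpen Ω) (hconn : IsPreconnected Ω)
    {f : ℂ → ℂ} (hf : ∀ z ∈ Ω, HasDerivAt f 0 z) {x y : ℂ} (hx : x ∈ Ω) (hy : y ∈ Ω) :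
    f x = f y := by
  have hloc : ∀ z ∈ Ω, ∀ᶠ w in nhds z, f w = f z := by
    intro z hz
    obtain ⟨ε, hε, hball⟩ := Metric.isOpen_iff.1 hΩ z hz
    filter_upwards [Metric.ball_mem_nhds z hε] with w hw
    refine (convex_ball z ε).is_const_of_fderivWithin_eq_zero
      (fun u hu => ((hf u (hball hu)).differentiableAt).differentiableWithinAt)
      (fun u hu => ?_) hw (Metric.mem_ball_self hε)
    rw [fderivWithin_of_isOpen Metric.isOpen_ball hu,
      (hf u (hball hu)).hasFDerivAt.fderiv]
    ext; simp
  haveI : PreconnectedSpace Ω := Subtype.preconnectedSpace hconn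
  have hlc : IsLocallyConstant (fun z : Ω => f z) := by
    rw [IsLocallyConstant.iff_eventually_eq]
    intro z
    exact (continuousAt_subtype_val (p := fun w => w ∈ Ω) (x := z)).eventually (hloc z z.2)
  exact hlc.apply_eq_of_preconnectedSpace ⟨x, hx⟩ ⟨y, hy⟩

theorem stmt_17 (Ω : Set ℂ) (hΩ : IsOpen Ω) (hconn : IsPreconnected Ω)
    (h : ℂ → ℂ) (hdiff : ∀ z ∈ Ω, DifferentiableAt ℂ h z)
    (hdiff2 : ∀ z ∈ Ω, DifferentiableAt ℂ (deriv h) z)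
    (hne : ∀ z ∈ Ω, h z ≠ 0) (hne' : ∀ z ∈ Ω, deriv h z ≠ 0)
    (L : ℂ → ℂ) (hL : DifferentiableOn ℂ L Ω) (hLh : ∀ z ∈ Ω, Complex.exp (L z) = h z)
    (c : ℝ) (hode : ∀ z ∈ Ω, h z * deriv (deriv h) z = (c : ℂ) * (deriv h z) ^ 2) :
    (c ≠ 1 → ∃ a b : ℂ, ∀ z ∈ Ω, Complex.exp ((1 - (c : ℂ)) * L z) = a * z + b) ∧
    (c = 1 → ∃ A B : ℂ, ∀ z ∈ Ω, h z = A * Complex.exp (B * z)) := by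
  rcases Ω.eq_empty_or_nonempty with rfl | ⟨z₀, hz₀⟩
  · exact ⟨fun _ => ⟨0, 0, fun z hz => absurd hz (Set.notMem_empty z)⟩,
      fun _ => ⟨0, 0, fun z hz => absurd hz (Set.notMem_empty z)⟩⟩
  -- L has derivative h'/h
  have hLd : ∀ z ∈ Ω, HasDerivAt L (deriv h z / h z) z := by
    intro z hz
    have hLdiff : DifferentiableAt ℂ L z := hL.differentiableAt (hΩ.mem_nhds hz)
    have h1 : HasDerivAt (fun w => Complex.exp (L w)) (Complex.exp (L z) * deriv L z) z :=
      hLdiff.hasDerivAt.cexp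
    have h2 : HasDerivAt h (Complex.exp (L z) * deriv L z) z := by
      refine h1.congr_of_eventuallyEq ?_
      filter_upwards [hΩ.mem_nhds hz] with w hw using (hLh w hw).symm
    have h3 : deriv h z = h z * deriv L z := by
      rw [h2.deriv, hLh z hz]
    have : deriv L z = deriv h z / h z := by
      field_simp [h3, hne z hz]
      linear_combination -h3
    exact this ▸ hLdiff.hasDerivAt
  constructor
  · -- c ≠ 1
    intro hc1
    set F : ℂ → ℂ := fun z => Complex.exp ((1 - (c : ℂ)) * L z) with hF
    set G : ℂ → ℂ := fun z => (1 - (c : ℂ)) * deriv h z * Complex.exp (-(c : ℂ) * L z) with hG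
    have hFd : ∀ z ∈ Ω, HasDerivAt F (G z) z := by
      intro z hz
      have := (((hLd z hz).const_mul (1 - (c : ℂ)))).cexp
      refine this.congr_deriv ?_
      have hsplit : Complex.exp ((1 - (c : ℂ)) * L z)
          = Complex.exp (-(c : ℂ) * L z) * h z := by
        rw [← hLh z hz, ← Complex.exp_add]; ring_nf
      rw [hG, hsplit]
      field_simp [hne z hz]
    have hGd : ∀ z ∈ Ω, HasDerivAt G 0 z := by
      intro z hz
      have hprod : HasDerivAt G
          ((1 - (c : ℂ)) * deriv (deriv h) z * Complex.exp (-(c : ℂ) * L z)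
            + (1 - (c : ℂ)) * deriv h z
              * (Complex.exp (-(c : ℂ) * L z) * (-(c : ℂ) * (deriv h z / h z)))) z := by
        exact ((hdiff2 z hz).hasDerivAt.const_mul (1 - (c : ℂ))).mul
          (((hLd z hz).const_mul (-(c : ℂ))).cexp)
      convert hprod using 1
      have key : h z * deriv (deriv h) z = (c : ℂ) * (deriv h z) ^ 2 := hode z hz
      set E := Complex.exp (-(c : ℂ) * L z) with hE
      field_simp [hne z hz]
      linear_combination ((c:ℂ)-1) * E * key
    set a : ℂ := G z₀ with ha
    have hGe : ∀ z ∈ Ω, G z = a := fun z hz => const_of_deriv_zero hΩ hconn hGd hz hz₀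
    set P : ℂ → ℂ := fun z => F z - a * z with hP
    have hPd : ∀ z ∈ Ω, HasDerivAt P 0 z := by
      intro z hz
      have := (hFd z hz).sub ((hasDerivAt_id z).const_mul a)
      exact this.congr_deriv (by rw [hGe z hz]; ring)
    refine ⟨a, P z₀, fun z hz => ?_⟩
    have hPz : P z = P z₀ := const_of_deriv_zero hΩ hconn hPd hz hz₀
    have : F z = a * z + P z₀ := by
      simp only [hP] at hPz ⊢
      linear_combination hPz
    simpa [hF] using this
  · -- c = 1
    intro hc1
    subst hc1
    set D : ℂ → ℂ := fun z => deriv h z / h z with hD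
    have hDd : ∀ z ∈ Ω, HasDerivAt D 0 z := by
      intro z hz
      have hdiv : HasDerivAt D
          ((deriv (deriv h) z * h z - deriv h z * deriv h z) / (h z) ^ 2) z :=
        (hdiff2 z hz).hasDerivAt.div (hdiff z hz).hasDerivAt (hne z hz)
      convert hdiv using 1
      have key := hode z hz
      push_cast at key
      rw [eq_comm, div_eq_zero_iff]
      left; linear_combination key
    set B : ℂ := D z₀ with hB
    have hDe : ∀ z ∈ Ω, D z = B := fun z hz =>
      const_of_deriv_zero hΩ hconn hDd hz hz₀
    set M : ℂ → ℂ := fun z => L z - B * z with hM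
    have hMd : ∀ z ∈ Ω, HasDerivAt M 0 z := by
      intro z hz
      have := (hLd z hz).sub ((hasDerivAt_id z).const_mul B)
      have hDB : deriv h z / h z = B := hDe z hz
      exact this.congr_deriv (by rw [hDB]; ring)
    refine ⟨Complex.exp (M z₀), B, fun z hz => ?_⟩
    have : M z = M z₀ := const_of_deriv_zero hΩ hconn hMd hz hz₀
    rw [← hLh z hz, ← Complex.exp_add]
    congr 1
    have := this
    simp only [hM] at this
    linear_combination this
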